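/- (Upper bound for the radius in the univalent case with a₀ = b₁ = 0.) Fix k ∈ [0,1). Let φ(z) = h(z) = z/(1−z)² (the Koebe function) on 𝔻 and let g be analytic on 𝔻 with g(0) = 0 and g'(z) = k z h'(z). Then φ is univalent with φ(0) = 0, h ≺ φ, |g'(z)| ≤ k|h'(z)| on 𝔻, g'(0) = 0, dist(0, ∂φ(𝔻)) = 1/4, the Taylor coefficients satisfy |a_n| = n for n ≥ 1 and |b_n| = k(n + 1/n − 2) for n ≥ 2, and for every r ∈ (0,1), ∑_{n=1}^∞ |a_n| r^n + ∑_{n=2}^∞ |b_n| r^n = r(1 + k(2r−1))/(1−r)² − k·log(1−r); in particular this sum exceeds 1/4 whenever R < r < 1, where R ∈ (0,1) is the root of R(1−k+2kR)/(1−R)² − k·log(1−R) = 1/4. -/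

import Mathlib

open Complex Metric Set FormalMultilinearSeries

noncomputable section

/-- The open unit disk in the complex plane. -/
def unitDisk : Set ℂ := Metric.ball 0 1

/-- `h` is subordinate to `φ` on the unit disk: `h = φ ∘ ω` for some analytic
self-map `ω` of the unit disk fixing the origin. -/
def Subordinate (h φ : ℂ → ℂ) : Prop :=
  ∃ ω : ℂ → ℂ, AnalyticOnNhd ℂ ω unitDisk ∧ ω 0 = 0 ∧
    Set.MapsTo ω unitDisk unitDisk ∧ ∀ z ∈ unitDisk, h z = φ (ω z)


lemma myHFP {f : ℂ → ℂ} {c : ℕ → ℂ}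
    (hc : ∀ z ∈ Metric.ball (0:ℂ) 1, HasSum (fun n : ℕ => c n * z ^ n) (f z)) :
    HasFPowerSeriesOnBall f (ofScalars ℂ c) 0 1 := by
  constructor
  · refine ENNReal.le_of_forall_nnreal_lt (fun r hr => ?_)
    have hrb : ((r:ℝ):ℂ) ∈ Metric.ball (0:ℂ) 1 := by
      rw [Metric.mem_ball, dist_zero_right, Complex.norm_real, Real.norm_eq_abs,
        _root_.abs_of_nonneg r.coe_nonneg]
      exact_mod_cast hr
    have hs := (hc _ hrb).summable
    apply FormalMultilinearSeries.le_radius_of_tendsto (l := 0)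
    have := (hs.tendsto_atTop_zero.norm)
    simp only [norm_zero] at this
    convert this using 2 with n
    rw [ofScalars_norm, norm_mul, norm_pow, Complex.norm_real, Real.norm_eq_abs,
      _root_.abs_of_nonneg r.coe_nonneg]
  · exact one_pos
  · intro y hy
    have hy' : y ∈ Metric.ball (0:ℂ) 1 := by
      simpa [Metric.emetric_ball_nnreal, ← ofReal_norm] using hy
    have := hc y hy'
    simp only [zero_add]
    convert this using 2 with n
    · rfl
    rw [ofScalars_apply_eq, smul_eq_mul]

lemma myUniq {f : ℂ → ℂ} {c d : ℕ → ℂ}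
    (hc : ∀ z ∈ Metric.ball (0:ℂ) 1, HasSum (fun n : ℕ => c n * z ^ n) (f z))
    (hd : ∀ z ∈ Metric.ball (0:ℂ) 1, HasSum (fun n : ℕ => d n * z ^ n) (f z)) :
    c = d := by
  have h1 := (myHFP hc).hasFPowerSeriesAt
  have h2 := (myHFP hd).hasFPowerSeriesAt
  exact ofScalars_series_injective ℂ ℂ (h1.eq_formalMultilinearSeries h2)

lemma myDeriv {f : ℂ → ℂ} {c : ℕ → ℂ}
    (hc : ∀ z ∈ Metric.ball (0:ℂ) 1, HasSum (fun n : ℕ => c n * z ^ n) (f z)) :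
    ∀ z ∈ Metric.ball (0:ℂ) 1,
      HasSum (fun n : ℕ => (n : ℂ) * c n * z ^ n) (z * deriv f z) := by
  intro z hz
  have hp := (myHFP hc).fderiv
  have hz' : z ∈ Metric.eball (0:ℂ) 1 := by
    simpa [Metric.emetric_ball_nnreal, ← ofReal_norm] using hz
  have hsum := hp.hasSum (by simpa using hz')
  have hmap := hsum.mapL (ContinuousLinearMap.apply ℂ ℂ z)
  have key : HasSum (fun n : ℕ => ((n:ℂ) + 1) * c (n+1) * z ^ (n+1)) (z * deriv f z) := by
    convert hmap using 2 with n
    · rfl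
    · rw [ContinuousLinearMap.apply_apply, derivSeries_apply_diag, ofScalars_apply_eq,
        smul_eq_mul, nsmul_eq_mul]
      push_cast
      ring
    · rw [ContinuousLinearMap.apply_apply, zero_add]
      have h1 : (fderiv ℂ f z) z = z • (fderiv ℂ f z) 1 := by
        rw [← (fderiv ℂ f z).map_smul, smul_eq_mul, mul_one]
      rw [h1, fderiv_apply_one_eq_deriv, smul_eq_mul]
  have h0 : HasSum (fun n : ℕ => ((n+1:ℕ) : ℂ) * c (n+1) * z ^ (n+1))
      (z * deriv f z - ∑ i ∈ Finset.range 1, (i:ℂ) * c i * z ^ i) := by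
    simpa using key
  exact (hasSum_nat_add_iff' 1).mp h0

lemma sq_re (z : ℂ) : ((1 - z)^2).re = (1 - z.re)^2 - z.im^2 := by
  simp [pow_two, Complex.mul_re]

lemma sq_im (z : ℂ) : ((1 - z)^2).im = -2*(1 - z.re)*z.im := by
  simp [pow_two, Complex.mul_im]; ring

/-- Koebe image avoids the slit. -/
lemma koebe_not_slit {z : ℂ} (hz : ‖z‖ < 1)
    (him : (z * ((1 - z) ^ 2)⁻¹).im = 0) (hre : (z * ((1 - z) ^ 2)⁻¹).re ≤ -(1/4)) : False := by
  have hz1 : (1 : ℂ) - z ≠ 0 := by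
    intro h
    have : z = 1 := by linear_combination -h
    rw [this] at hz; simp at hz
  have hsq : ((1 : ℂ) - z)^2 ≠ 0 := pow_ne_zero _ hz1
  set w := z * ((1 - z) ^ 2)⁻¹ with hw
  set t := w.re with htd
  have hwt : w = (t : ℂ) := Complex.ext rfl (by simp [him])
  have e : (t : ℂ) * (1 - z)^2 = z := by
    rw [← hwt, hw]
    field_simp
  have e1 : t * ((1 - z.re)^2 - z.im^2) = z.re := by
    have := congrArg Complex.re e
    simpa [Complex.mul_re, sq_re, sq_im] using this
  have e2 : t * (-2*(1 - z.re)*z.im) = z.im := by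
    have := congrArg Complex.im e
    simpa [Complex.mul_im, sq_re, sq_im] using this
  set x := z.re; set y := z.im
  have hxy : x^2 + y^2 < 1 := by
    have h1 : ‖z‖ < 1 := hz
    have h2 : ‖z‖^2 = x^2 + y^2 := by
      rw [Complex.sq_norm, Complex.normSq_apply]; ring
    nlinarith [norm_nonneg z]
  rcases eq_or_ne y 0 with hy | hy
  · rw [hy] at e1
    have hxlt : -1 < x := by nlinarith
    nlinarith [sq_nonneg (1 + x), sq_nonneg (1 - x)]
  · have hc : 1 + 2*t - 2*t*x = 0 := by
      have h2 : y * (1 + 2*t*(1 - x)) = 0 := by linear_combination -e2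
      rcases mul_eq_zero.mp h2 with h | h
      · exact absurd h hy
      · linear_combination h
    have hone : x^2 + y^2 = 1 := by
      linear_combination (-(2*(x-1)))*e1 + ((y^2 - (1-x)^2))*hc
    linarith

/-- If `|z| = 1`, `z ≠ 1` and `w(1-z)² = z`, then `w` is on the slit. -/
lemma koebe_circle {z w : ℂ} (hz : ‖z‖ = 1) (hz1 : z ≠ 1) (e : w * (1 - z)^2 = z) :
    w.im = 0 ∧ w.re ≤ -(1/4) := by
  set x := z.re with hxd
  set y := z.im with hyd
  set u := w.re with hud
  set v := w.im with hvd
  have hcirc : x^2 + y^2 = 1 := by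
    have h2 : ‖z‖^2 = x^2 + y^2 := by
      rw [Complex.sq_norm, Complex.normSq_apply]; ring
    rw [hz] at h2
    linarith
  have hx : x < 1 := by
    rcases lt_or_ge x 1 with h | h
    · exact h
    · exfalso
      have hy0 : y = 0 := by nlinarith
      have hx1 : x = 1 := by nlinarith
      exact hz1 (Complex.ext (by simpa using hx1) (by simpa using hy0))
  have hxm : -1 ≤ x := by nlinarith
  have e1 : u*((1-x)^2 - y^2) - v*(-2*(1-x)*y) = x := by
    have := congrArg Complex.re e
    simp only [Complex.mul_re, sq_re, sq_im] at this
    linear_combination this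
  have e2 : u*(-2*(1-x)*y) + v*((1-x)^2 - y^2) = y := by
    have := congrArg Complex.im e
    simp only [Complex.mul_im, sq_re, sq_im] at this
    linear_combination this
  have hv : v * (4*(1-x)^2) = 0 := by
    linear_combination (2*(1-x)*y)*e1 + ((1-x)^2 - y^2)*e2 +
      (-y - 4*v*(1-x) - v*(x^2+y^2-1))*hcirc
  have hv0 : v = 0 := by
    rcases mul_eq_zero.mp hv with h | h
    · exact h
    · exfalso; nlinarith
  have hu : u * (4*(1-x)^2) = -2*(1-x) := by
    linear_combination ((1-x)^2 - y^2)*e1 + (-2*(1-x)*y)*e2 -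
      (4*u*(1-x) + u*(x^2+y^2-1) + 2 - x)*hcirc
  constructor
  · exact hv0
  · have h1x : (0:ℝ) < 1 - x := by linarith
    have key : (u + 1/4) * (4*(1-x)^2) = (1-x)*(-1-x) := by linear_combination hu
    nlinarith [key, h1x, mul_pos h1x h1x, mul_nonneg h1x.le (by linarith : (0:ℝ) ≤ 1 + x)]

lemma koebe_surj {w : ℂ} (hw : ¬(w.im = 0 ∧ w.re ≤ -(1/4))) :
    ∃ z : ℂ, ‖z‖ < 1 ∧ z * ((1 - z)^2)⁻¹ = w := by
  rcases eq_or_ne w 0 with rfl | hw0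
  · exact ⟨0, by simp⟩
  obtain ⟨c, hc⟩ := IsAlgClosed.exists_pow_nat_eq (4*w + 1) (n := 2) (by norm_num)
  have h2w : (2:ℂ)*w ≠ 0 := by simpa using hw0
  set z₁ := (2*w + 1 - c)/(2*w) with hz1d
  set z₂ := (2*w + 1 + c)/(2*w) with hz2d
  have hq1 : w*z₁^2 - (2*w+1)*z₁ + w = 0 := by
    rw [hz1d]; field_simp; linear_combination hc
  have hq2 : w*z₂^2 - (2*w+1)*z₂ + w = 0 := by
    rw [hz2d]; field_simp; linear_combination hc
  have hwe1 : w*(1-z₁)^2 = z₁ := by linear_combination hq1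
  have hwe2 : w*(1-z₂)^2 = z₂ := by linear_combination hq2
  have hne1 : z₁ ≠ 1 := by
    intro h; rw [h] at hq1; simp at hq1
    exact absurd (by linear_combination -hq1 : (1:ℂ) = 0) one_ne_zero
  have hne2 : z₂ ≠ 1 := by
    intro h; rw [h] at hq2; simp at hq2
    exact absurd (by linear_combination -hq2 : (1:ℂ) = 0) one_ne_zero
  have hphi : ∀ z : ℂ, z ≠ 1 → w*(1-z)^2 = z → z * ((1 - z)^2)⁻¹ = w := by
    intro z hz hwz
    have h1z : (1:ℂ) - z ≠ 0 := by
      intro h; exact hz (by linear_combination -h)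
    field_simp
    linear_combination -hwz
  have hprod : z₁ * z₂ = 1 := by
    rw [hz1d, hz2d]; field_simp; linear_combination (-(1:ℂ))*hc  -- guess
  rcases lt_or_ge ‖z₁‖ 1 with h1 | h1
  · exact ⟨z₁, h1, hphi z₁ hne1 hwe1⟩
  rcases lt_or_ge ‖z₂‖ 1 with h2 | h2
  · exact ⟨z₂, h2, hphi z₂ hne2 hwe2⟩
  exfalso
  have hn : ‖z₁‖ * ‖z₂‖ = 1 := by rw [← norm_mul, hprod, norm_one]
  have he1 : ‖z₁‖ = 1 := by nlinarith
  exact hw (koebe_circle he1 hne1 hwe1)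

def slit : Set ℂ := {w : ℂ | w.im = 0 ∧ w.re ≤ -(1/4)}

lemma slit_closed : IsClosed slit := by
  have h1 : slit = (Complex.im ⁻¹' {0}) ∩ (Complex.re ⁻¹' (Set.Iic (-(1/4)))) := by
    ext w; simp [slit, Set.mem_setOf_eq]
  rw [h1]
  exact (isClosed_singleton.preimage Complex.continuous_im).inter
    (isClosed_Iic.preimage Complex.continuous_re)

lemma slit_interior : interior slit = ∅ := by
  rw [Set.eq_empty_iff_forall_notMem]
  intro w hw
  obtain ⟨ε, hε, hball⟩ := Metric.isOpen_iff.mp isOpen_interior w hw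
  have hmem : w + Complex.I * (ε/2 : ℝ) ∈ Metric.ball w ε := by
    rw [Metric.mem_ball, dist_eq_norm]
    simp [Complex.norm_real]
    rw [abs_of_pos (by linarith)]
    linarith
  have := (interior_subset (hball hmem) : _ ∈ slit).1
  simp [Complex.add_im] at this
  have hw0 := (interior_subset hw : w ∈ slit).1
  rw [hw0] at this
  simp at this
  linarith

lemma slit_infDist : Metric.infDist (0:ℂ) slit = 1/4 := by
  have hmem : ((-(1/4):ℝ):ℂ) ∈ slit := by
    constructor <;> simp
  apply le_antisymm
  · have h := Metric.infDist_le_dist_of_mem (x := (0:ℂ)) hmem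
    rw [dist_eq_norm] at h
    simpa [Complex.norm_real] using h
  · by_contra hlt
    push_neg at hlt
    obtain ⟨y, hy, hd⟩ := (Metric.infDist_lt_iff ⟨_, hmem⟩).mp hlt
    rw [dist_eq_norm, zero_sub, norm_neg] at hd
    have h1 : |y.re| ≤ ‖y‖ := Complex.abs_re_le_norm y
    have h2 : (1:ℝ)/4 ≤ |y.re| := by
      rw [abs_le'] at h1
      have := hy.2
      rw [abs_of_nonpos (by linarith)]
      linarith
    linarith

lemma koebe_image : (fun z : ℂ => z * ((1 - z)^2)⁻¹) '' (Metric.ball 0 1) = slitᶜ := by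
  ext w
  constructor
  · rintro ⟨z, hz, rfl⟩
    intro hmem
    exact koebe_not_slit (mem_ball_zero_iff.mp hz) hmem.1 hmem.2
  · intro hw
    obtain ⟨z, hz, hzw⟩ := koebe_surj (fun hc => hw hc)
    exact ⟨z, mem_ball_zero_iff.mpr hz, hzw⟩

lemma slit_frontier : frontier (slitᶜ) = slit := by
  rw [frontier_compl, slit_closed.frontier_eq, slit_interior, Set.diff_empty]

theorem bohr_radius_univalent_b1_zero_sharp
    (k : ℝ) (hk : k ∈ Set.Ico (0 : ℝ) 1)
    (φ h g : ℂ → ℂ) (a b : ℕ → ℂ)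
    (hφ : ∀ z : ℂ, φ z = z * ((1 - z) ^ 2)⁻¹)
    (hh : ∀ z : ℂ, h z = z * ((1 - z) ^ 2)⁻¹)
    (hgan : AnalyticOnNhd ℂ g unitDisk) (hg0 : g 0 = 0)
    (hg' : ∀ z ∈ unitDisk, deriv g z = (k : ℂ) * z * deriv h z)
    (ha : ∀ z ∈ unitDisk, HasSum (fun n : ℕ => a n * z ^ n) (h z))
    (hb : ∀ z ∈ unitDisk, HasSum (fun n : ℕ => b n * z ^ n) (g z))
    (R : ℝ) (hR : R ∈ Set.Ioo (0 : ℝ) 1)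
    (hRroot : R * (1 - k + 2 * k * R) / (1 - R) ^ 2 - k * Real.log (1 - R) = 1 / 4) :
    Set.InjOn φ unitDisk ∧ φ 0 = 0 ∧
    Subordinate h φ ∧
    (∀ z ∈ unitDisk, ‖deriv g z‖ ≤ k * ‖deriv h z‖) ∧
    deriv g 0 = 0 ∧
    Metric.infDist 0 (frontier (φ '' unitDisk)) = 1 / 4 ∧
    (∀ n : ℕ, 1 ≤ n → ‖a n‖ = n) ∧
    (∀ n : ℕ, 2 ≤ n → ‖b n‖ = k * ((n : ℝ) + 1 / n - 2)) ∧
    (∀ r : ℝ, r ∈ Set.Ioo (0 : ℝ) 1 →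
      (∑' n : ℕ, ‖a (n + 1)‖ * r ^ (n + 1)) +
        (∑' n : ℕ, ‖b (n + 2)‖ * r ^ (n + 2))
        = r * (1 + k * (2 * r - 1)) / (1 - r) ^ 2 - k * Real.log (1 - r)) ∧
    (∀ r : ℝ, R < r → r < 1 →
      1 / 4 < (∑' n : ℕ, ‖a (n + 1)‖ * r ^ (n + 1)) +
        (∑' n : ℕ, ‖b (n + 2)‖ * r ^ (n + 2))) := by
  obtain ⟨hk0, hk1⟩ := hk
  obtain ⟨hR0, hR1⟩ := hR
  -- coefficients a
  have haeq : a = fun n : ℕ => (n : ℂ) := by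
    apply myUniq (f := h) ha
    intro z hz
    have h2 := hasSum_coe_mul_geometric_of_norm_lt_one (mem_ball_zero_iff.mp hz)
    rw [div_eq_mul_inv] at h2
    rw [hh z]; exact h2
  have han : ∀ n : ℕ, ‖a n‖ = n := by
    intro n; rw [haeq]; simp
  -- coefficients b
  have hdb := myDeriv (f := g) (c := b) hb
  have hda := myDeriv (f := h) (c := a) ha
  have hbc : (fun n : ℕ => (n:ℂ) * b n)
      = (fun n : ℕ => if n = 0 then (0:ℂ) else (k:ℂ) * ((n-1 : ℕ):ℂ) * a (n-1)) := by
    apply myUniq (f := fun z => z * deriv g z) hdb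
    intro z hz
    have h2 := (hda z hz).mul_left ((k:ℂ) * z)
    have h3 : HasSum
        (fun n : ℕ => (fun j : ℕ => (if j = 0 then (0:ℂ) else (k:ℂ) * ((j-1 : ℕ):ℂ) * a (j-1)) * z ^ j) (n+1))
        ((fun z => z * deriv g z) z - ∑ i ∈ Finset.range 1,
          (if i = 0 then (0:ℂ) else (k:ℂ) * ((i-1 : ℕ):ℂ) * a (i-1)) * z ^ i) := by
      simp only [Finset.range_one, Finset.sum_singleton, if_pos rfl, zero_mul, sub_zero,
        Nat.add_sub_cancel, if_neg (Nat.succ_ne_zero _)]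
      convert h2 using 1
      · rfl
      · funext n; push_cast; ring
      · simp only [hg' z hz]; norm_num; ring
    exact (hasSum_nat_add_iff' 1).mp h3
  have hbn : ∀ n : ℕ, 2 ≤ n → ‖b n‖ = k * ((n : ℝ) + 1 / n - 2) := by
    intro n hn
    obtain ⟨m, rfl⟩ : ∃ m, n = m + 1 := ⟨n - 1, by omega⟩
    have h2 := congrFun hbc (m+1)
    simp only [haeq, if_neg (Nat.succ_ne_zero m), Nat.add_sub_cancel] at h2
    have hm1 : ((m:ℂ) + 1) ≠ 0 := by
      intro hcon
      have : ((m:ℝ) + 1) = 0 := by exact_mod_cast congrArg Complex.re hcon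
      have : (0:ℝ) ≤ (m:ℝ) := Nat.cast_nonneg m
      linarith
    have hb' : b (m+1) = (((k * m * m / (m+1) : ℝ)) : ℂ) := by
      push_cast
      rw [eq_div_iff hm1]
      push_cast at h2
      linear_combination h2
    rw [hb', Complex.norm_real, Real.norm_eq_abs, _root_.abs_of_nonneg (by positivity)]
    have hm : 1 ≤ m := by omega
    have hmr : (0:ℝ) < (m:ℝ) + 1 := by positivity
    push_cast
    field_simp
    ring
  -- sum formulas
  have hsum1 : ∀ r : ℝ, r ∈ Set.Ioo (0:ℝ) 1 →
      HasSum (fun n : ℕ => ‖a (n+1)‖ * r ^ (n+1)) (r / (1-r)^2) := by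
    rintro r ⟨hr0, hr1⟩
    have h2 : HasSum (fun n : ℕ => (n:ℝ) * r ^ n) (r / (1-r)^2) :=
      hasSum_coe_mul_geometric_of_norm_lt_one
        (by rw [Real.norm_eq_abs, abs_of_pos hr0]; exact hr1)
    have h3 := (hasSum_nat_add_iff' 1).mpr h2
    have h4 : (fun n : ℕ => ‖a (n+1)‖ * r^(n+1)) = (fun n : ℕ => ((n+1:ℕ):ℝ) * r^(n+1)) := by
      funext n; rw [han]
    rw [h4]; simpa using h3
  have hsum2 : ∀ r : ℝ, r ∈ Set.Ioo (0:ℝ) 1 →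
      HasSum (fun n : ℕ => ‖b (n+2)‖ * r ^ (n+2))
        (k * (r * (2*r-1) / (1-r)^2 - Real.log (1-r))) := by
    rintro r ⟨hr0, hr1⟩
    have hrn : ‖r‖ < 1 := by rw [Real.norm_eq_abs, abs_of_pos hr0]; exact hr1
    have hne : (1:ℝ) - r ≠ 0 := by intro hcon; linarith [hcon]
    have t1 : HasSum (fun n : ℕ => ((n+2:ℕ):ℝ) * r ^ (n+2)) (r/(1-r)^2 - r) := by
      have h2 := hasSum_coe_mul_geometric_of_norm_lt_one hrn
      have h3 := (hasSum_nat_add_iff' 2).mpr h2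
      simpa [Finset.sum_range_succ] using h3
    have t2 : HasSum (fun n : ℕ => r ^ (n+2)) ((1-r)⁻¹ - 1 - r) := by
      have h2 := hasSum_geometric_of_lt_one hr0.le hr1
      have h3 := (hasSum_nat_add_iff' 2).mpr h2
      have : (1-r)⁻¹ - 1 - r = (1-r)⁻¹ - ∑ i ∈ Finset.range 2, r ^ i := by
        simp [Finset.sum_range_succ]; ring
      rw [this]; exact h3
    have t3 : HasSum (fun n : ℕ => r ^ (n+2) / ((n:ℝ)+2)) (-Real.log (1-r) - r) := by
      have h2 := Real.hasSum_pow_div_log_of_abs_lt_one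
        (by rw [abs_of_pos hr0]; exact hr1)
      have h3 := (hasSum_nat_add_iff' (f := fun n : ℕ => r ^ (n+1) / ((n:ℝ)+1)) 1).mpr h2
      simp only [Finset.range_one, Finset.sum_singleton] at h3
      convert h3 using 2 with n
      · rfl
      · push_cast; ring_nf
      · norm_num
    have t4 := ((t1.sub (t2.mul_left 2)).add t3).mul_left k
    have h4 : (fun n : ℕ => ‖b (n+2)‖ * r^(n+2))
        = fun n : ℕ => k * ((((n+2:ℕ):ℝ) * r^(n+2) - 2 * r^(n+2)) + r^(n+2)/((n:ℝ)+2)) := by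
      funext n
      rw [hbn (n+2) (by omega)]
      have hn2 : ((n:ℝ)+2) ≠ 0 := by positivity
      push_cast
      field_simp
      ring
    rw [h4]
    convert t4 using 1
    · rfl
    field_simp
    ring
  have hmain : ∀ r : ℝ, r ∈ Set.Ioo (0 : ℝ) 1 →
      (∑' n : ℕ, ‖a (n + 1)‖ * r ^ (n + 1)) +
        (∑' n : ℕ, ‖b (n + 2)‖ * r ^ (n + 2))
        = r * (1 + k * (2 * r - 1)) / (1 - r) ^ 2 - k * Real.log (1 - r) := by
    intro r hr
    rw [(hsum1 r hr).tsum_eq, (hsum2 r hr).tsum_eq]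
    have hne : (1:ℝ) - r ≠ 0 := by intro hcon; linarith [hr.2, hcon]
    field_simp
    ring
  refine ⟨?_, ?_, ?_, ?_, ?_, ?_, fun n _ => han n, hbn, hmain, ?_⟩
  · -- InjOn
    intro z hz w hw e
    have hzn := mem_ball_zero_iff.mp hz
    have hwn := mem_ball_zero_iff.mp hw
    have hz1 : (1:ℂ) - z ≠ 0 := by
      intro hcon
      have : z = 1 := by linear_combination -hcon
      rw [this] at hzn; simp at hzn
    have hw1 : (1:ℂ) - w ≠ 0 := by
      intro hcon
      have : w = 1 := by linear_combination -hcon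
      rw [this] at hwn; simp at hwn
    rw [hφ z, hφ w] at e
    have e2 : z * (1-w)^2 = w * (1-z)^2 := by
      field_simp at e
      linear_combination e
    have e3 : (z - w) * (1 - z*w) = 0 := by linear_combination e2
    rcases mul_eq_zero.mp e3 with hcase | hcase
    · exact sub_eq_zero.mp hcase
    · exfalso
      have h1 : z*w = 1 := by linear_combination -hcase
      have h2 : ‖z*w‖ = 1 := by rw [h1]; simp
      rw [norm_mul] at h2
      nlinarith [norm_nonneg z, norm_nonneg w]
  · rw [hφ 0]; simp
  · exact ⟨id, analyticOnNhd_id, rfl, fun z hz => hz, fun z _ => by simp only [id_eq]; rw [hh z, hφ z]⟩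
  · intro z hz
    rw [hg' z hz]
    have h1 : ‖(k:ℂ) * z * deriv h z‖ = k * ‖z‖ * ‖deriv h z‖ := by
      rw [norm_mul, norm_mul, Complex.norm_real, Real.norm_eq_abs, _root_.abs_of_nonneg hk0]
    rw [h1]
    have hzn := mem_ball_zero_iff.mp hz
    calc k * ‖z‖ * ‖deriv h z‖ ≤ k * 1 * ‖deriv h z‖ := by
          gcongr
      _ = k * ‖deriv h z‖ := by ring
  · have h0 : (0:ℂ) ∈ unitDisk := mem_ball_zero_iff.mpr (by simp)
    rw [hg' 0 h0]; ring
  · have himg : φ '' unitDisk = slitᶜ := by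
      have hfun : φ = fun z : ℂ => z * ((1-z)^2)⁻¹ := funext hφ
      rw [hfun]
      exact koebe_image
    rw [himg, slit_frontier, slit_infDist]
  · intro r hRr hr1
    have hrIoo : r ∈ Set.Ioo (0:ℝ) 1 := ⟨lt_trans hR0 hRr, hr1⟩
    have hRIoo : R ∈ Set.Ioo (0:ℝ) 1 := ⟨hR0, hR1⟩
    have hAr := hsum1 r hrIoo
    have hBr := hsum2 r hrIoo
    have hAR := hsum1 R hRIoo
    have hBR := hsum2 R hRIoo
    have hsumeq : (∑' n : ℕ, ‖a (n + 1)‖ * R ^ (n + 1)) +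
        (∑' n : ℕ, ‖b (n + 2)‖ * R ^ (n + 2)) = 1/4 := by
      rw [hmain R hRIoo, ← hRroot]
      ring
    have hA_lt : (∑' n : ℕ, ‖a (n + 1)‖ * R ^ (n + 1))
        < ∑' n : ℕ, ‖a (n + 1)‖ * r ^ (n + 1) := by
      refine Summable.tsum_lt_tsum (i := 0) ?_ ?_ hAR.summable hAr.summable
      · intro n
        exact mul_le_mul_of_nonneg_left
          (pow_le_pow_left₀ hR0.le hRr.le _) (norm_nonneg _)
      · simpa [han] using hRr
    have hB_le : (∑' n : ℕ, ‖b (n + 2)‖ * R ^ (n + 2))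
        ≤ ∑' n : ℕ, ‖b (n + 2)‖ * r ^ (n + 2) := by
      refine Summable.tsum_le_tsum ?_ hBR.summable hBr.summable
      intro n
      exact mul_le_mul_of_nonneg_left
        (pow_le_pow_left₀ hR0.le hRr.le _) (norm_nonneg _)
    linarith
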